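/- In the MM setting, for any MM sequence (x_k) (i.e., x_{k+1} ∈ argmin_{D(x_k)} h_{x_k}), the interlacing f(x_k) ≥ F(x_k) ≥ f(x_{k+1}) holds for all k; consequently (x_k) is a minimizing sequence for f if and only if it is a minimizing sequence for F. -/

import Mathlib

open Filter Topology

/-- MM sequences interlace: `f(x_k) ≥ F(x_k) ≥ f(x_{k+1})` where `F x = inf_{D x} (h x)`;
consequently an MM sequence is minimizing for `f` iff it is minimizing for `F`. -/
theorem mm_interlacing {X : Type*} (f : X → ℝ) (D : X → Set X) (h : X → X → ℝ)
    (hmem : ∀ x, x ∈ D x)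
    (hmaj : ∀ x, ∀ y ∈ D x, f y ≤ h x y)
    (heq : ∀ x, h x x = f x)
    (x : ℕ → X)
    (hMM : ∀ k : ℕ, x (k+1) ∈ D (x k) ∧ ∀ y ∈ D (x k), h (x k) (x (k+1)) ≤ h (x k) y) :
    (∀ k : ℕ, (f (x (k+1)) : EReal) ≤ (⨅ y : D (x k), (h (x k) y : EReal)) ∧
        (⨅ y : D (x k), (h (x k) y : EReal)) ≤ (f (x k) : EReal)) ∧
      (Tendsto (fun k => (f (x k) : EReal)) atTop (nhds (⨅ z : X, (f z : EReal))) ↔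
        Tendsto (fun k => ⨅ y : D (x k), (h (x k) y : EReal)) atTop
          (nhds (⨅ z : X, ⨅ y : D z, (h z y : EReal)))) := by
  have key : ∀ k : ℕ, (f (x (k+1)) : EReal) ≤ (⨅ y : D (x k), (h (x k) y : EReal)) ∧
      (⨅ y : D (x k), (h (x k) y : EReal)) ≤ (f (x k) : EReal) := by
    intro k
    constructor
    · apply le_iInf
      intro y
      calc (f (x (k+1)) : EReal) ≤ (h (x k) (x (k+1)) : EReal) := by
            exact_mod_cast hmaj (x k) _ (hMM k).1
        _ ≤ (h (x k) y : EReal) := by exact_mod_cast (hMM k).2 y y.2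
    · calc (⨅ y : D (x k), (h (x k) y : EReal)) ≤ (h (x k) (x k) : EReal) :=
          iInf_le _ (⟨x k, hmem (x k)⟩ : D (x k))
        _ = (f (x k) : EReal) := by rw [heq]
  refine ⟨key, ?_⟩
  have hinf : (⨅ z : X, ⨅ y : D z, (h z y : EReal)) = ⨅ z : X, (f z : EReal) := by
    apply le_antisymm
    · apply iInf_mono
      intro z
      calc (⨅ y : D z, (h z y : EReal)) ≤ (h z z : EReal) := iInf_le _ (⟨z, hmem z⟩ : D z)
        _ = (f z : EReal) := by rw [heq]
    · apply le_iInf; intro z; apply le_iInf; intro y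
      calc (⨅ w : X, (f w : EReal)) ≤ (f (y : X) : EReal) := iInf_le _ (y : X)
        _ ≤ (h z y : EReal) := by exact_mod_cast hmaj z y y.2
  rw [hinf]
  set S := ⨅ z : X, (f z : EReal) with hS
  have hSle : ∀ w : X, S ≤ (f w : EReal) := fun w => iInf_le _ w
  constructor
  · intro ht
    have h1 : Tendsto (fun k => (f (x (k+1)) : EReal)) atTop (nhds S) :=
      ht.comp (tendsto_add_atTop_nat 1)
    exact tendsto_of_tendsto_of_tendsto_of_le_of_le h1 ht
      (fun k => (key k).1) (fun k => (key k).2)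
  · intro ht
    have h1 : Tendsto (fun k => (f (x (k+1)) : EReal)) atTop (nhds S) :=
      tendsto_of_tendsto_of_tendsto_of_le_of_le tendsto_const_nhds ht
        (fun k => hSle (x (k+1))) (fun k => (key k).1)
    exact (tendsto_add_atTop_iff_nat 1).mp h1
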